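/- arXiv:2209.05146 — 3 statements merged into one kernel-verified Lean document; each statement's English description precedes it below -/
import Mathlib

section
/- Monotonicity of the Riccati-type operator in its matrix argument: if X and Y are n_x×n_x positive semidefinite symmetric matrices with X ⪯ Y, then for every λ ∈ [0,1], φ ∈ [0,1] and α > 0 one has 𝒳_λ(X, α, φ) ⪯ 𝒳_λ(Y, α, φ). -/
open Matrix

lemma herm_t {n m : ℕ} (M : Matrix (Fin n) (Fin m) ℝ) : Mᴴ = Mᵀ :=
  Matrix.conjTranspose_eq_transpose_of_trivial M

lemma psd_smul {n : ℕ} {M : Matrix (Fin n) (Fin n) ℝ} (hM : M.PosSemidef) {c : ℝ}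
    (hc : 0 ≤ c) : (c • M).PosSemidef := by
  refine ⟨?_, fun x => ?_⟩
  · have h : Mᵀ = M := (herm_t M) ▸ hM.1.eq
    simp [Matrix.IsHermitian, conjTranspose_smul, h]
  · exact (hM.smul hc).2 x

lemma pd_smul {n : ℕ} {M : Matrix (Fin n) (Fin n) ℝ} (hM : M.PosDef) {c : ℝ}
    (hc : 0 < c) : (c • M).PosDef := by
  refine ⟨?_, fun x hx => ?_⟩
  · have h : Mᵀ = M := (herm_t M) ▸ hM.1.eq
    simp [Matrix.IsHermitian, conjTranspose_smul, h]
  · exact (hM.smul hc).2 hx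

/-- The Riccati-type operator 𝒳_λ(X, α, φ). -/
noncomputable def calX {nx ny : ℕ} (A : Matrix (Fin nx) (Fin nx) ℝ)
    (L : Matrix (Fin ny) (Fin nx) ℝ) (Q : Matrix (Fin nx) (Fin nx) ℝ)
    (R : Matrix (Fin ny) (Fin ny) ℝ) (lam : ℝ) (X : Matrix (Fin nx) (Fin nx) ℝ)
    (al phi : ℝ) : Matrix (Fin nx) (Fin nx) ℝ :=
  (1 - lam * phi) • (A * X * Aᵀ + al • Q) +
    (lam * phi) •
      (A * X * Aᵀ + al • Q - A * X * Lᵀ * (L * X * Lᵀ + al • R)⁻¹ * (L * X * Aᵀ))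

/-- Loewner order: `X ⪯ Y` iff `Y - X` is positive semidefinite. -/
def loewnerLE {nx : ℕ} (X Y : Matrix (Fin nx) (Fin nx) ℝ) : Prop :=
  (Y - X).PosSemidef

theorem stmt_0 {nx ny : ℕ} (hnx : 0 < nx) (hny : 0 < ny)
    (A : Matrix (Fin nx) (Fin nx) ℝ) (L : Matrix (Fin ny) (Fin nx) ℝ)
    (Q : Matrix (Fin nx) (Fin nx) ℝ) (R : Matrix (Fin ny) (Fin ny) ℝ)
    (hQ : Q.PosDef) (hR : R.PosDef)
    (X Y : Matrix (Fin nx) (Fin nx) ℝ) (hX : X.PosSemidef) (hY : Y.PosSemidef)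
    (hXY : loewnerLE X Y)
    (lam phi al : ℝ) (hlam : lam ∈ Set.Icc (0 : ℝ) 1)
    (hphi : phi ∈ Set.Icc (0 : ℝ) 1) (hal : 0 < al) :
    loewnerLE (calX A L Q R lam X al phi) (calX A L Q R lam Y al phi) := by
  obtain ⟨hl0, hl1⟩ := hlam
  obtain ⟨hp0, hp1⟩ := hphi
  have hXs : Xᵀ = X := (herm_t X) ▸ hX.1.eq
  have hYs : Yᵀ = Y := (herm_t Y) ▸ hY.1.eq
  set MX := L * X * Lᵀ + al • R with hMXdef
  set MY := L * Y * Lᵀ + al • R with hMYdef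
  have hSR : (al • R).PosDef := pd_smul hR hal
  have hLX : (L * X * Lᵀ).PosSemidef := by
    have := hX.mul_mul_conjTranspose_same L
    rwa [herm_t] at this
  have hLY : (L * Y * Lᵀ).PosSemidef := by
    have := hY.mul_mul_conjTranspose_same L
    rwa [herm_t] at this
  have hMX : MX.PosDef := Matrix.PosDef.posSemidef_add hLX hSR
  have hMY : MY.PosDef := Matrix.PosDef.posSemidef_add hLY hSR
  have hdX : IsUnit MX.det := hMX.det_pos.ne'.isUnit
  have hdY : IsUnit MY.det := hMY.det_pos.ne'.isUnit
  have hNX : MX * MX⁻¹ = 1 := Matrix.mul_nonsing_inv _ hdX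
  have hNX' : MX⁻¹ * MX = 1 := Matrix.nonsing_inv_mul _ hdX
  have hPY : MY⁻¹ * MY = 1 := Matrix.nonsing_inv_mul _ hdY
  have hMXs : MXᵀ = MX := (herm_t MX) ▸ hMX.1.eq
  have hMYs : MYᵀ = MY := (herm_t MY) ▸ hMY.1.eq
  have hNs : (MX⁻¹)ᵀ = MX⁻¹ := by rw [Matrix.transpose_nonsing_inv, hMXs]
  have hPs : (MY⁻¹)ᵀ = MY⁻¹ := by rw [Matrix.transpose_nonsing_inv, hMYs]
  have hD : (Y - X).PosSemidef := hXY
  have hC1 : (1 - (Y * Lᵀ * MY⁻¹) * L)ᴴ = 1 - Lᵀ * (MY⁻¹ * (L * Y)) := by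
    simp [herm_t, Matrix.transpose_sub, Matrix.transpose_mul, Matrix.transpose_one,
      Matrix.transpose_transpose, hYs, hPs, Matrix.mul_assoc]
  have hC2 : ((Y * Lᵀ * MY⁻¹) - X * Lᵀ * MX⁻¹)ᴴ = MY⁻¹ * (L * Y) - MX⁻¹ * (L * X) := by
    simp [herm_t, Matrix.transpose_sub, Matrix.transpose_mul,
      Matrix.transpose_transpose, hYs, hXs, hPs, hNs, Matrix.mul_assoc]
  have hT1 : ((1 - (Y * Lᵀ * MY⁻¹) * L) * (Y - X) * (1 - Lᵀ * (MY⁻¹ * (L * Y)))).PosSemidef := by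
    have := hD.mul_mul_conjTranspose_same (1 - (Y * Lᵀ * MY⁻¹) * L)
    rwa [hC1] at this
  have hT2 : (((Y * Lᵀ * MY⁻¹) - X * Lᵀ * MX⁻¹) * MX *
      (MY⁻¹ * (L * Y) - MX⁻¹ * (L * X))).PosSemidef := by
    have := hMX.posSemidef.mul_mul_conjTranspose_same ((Y * Lᵀ * MY⁻¹) - X * Lᵀ * MX⁻¹)
    rwa [hC2] at this
  have hMXY : MX = MY - L * (Y - X) * Lᵀ := by
    rw [hMXdef, hMYdef]
    simp only [Matrix.mul_sub, Matrix.sub_mul]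
    abel
  have e2 : ((Y * Lᵀ * MY⁻¹) - X * Lᵀ * MX⁻¹) * MX * (MY⁻¹ * (L * Y) - MX⁻¹ * (L * X)) =
      Y * Lᵀ * (MY⁻¹ * MX * (MY⁻¹ * (L * Y))) - Y * Lᵀ * (MY⁻¹ * (MX * MX⁻¹) * (L * X))
        - X * Lᵀ * ((MX⁻¹ * MX) * (MY⁻¹ * (L * Y)))
        + X * Lᵀ * ((MX⁻¹ * MX) * (MX⁻¹ * (L * X))) := by
    simp only [Matrix.mul_sub, Matrix.sub_mul, Matrix.mul_assoc]
    abel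
  rw [hNX, hNX'] at e2
  simp only [Matrix.mul_one, Matrix.one_mul] at e2
  have hPMX : MY⁻¹ * MX * (MY⁻¹ * (L * Y)) =
      MY⁻¹ * (L * Y) - MY⁻¹ * (L * (Y - X) * Lᵀ * (MY⁻¹ * (L * Y)))  := by
    rw [hMXY, Matrix.mul_sub, Matrix.sub_mul, hPY, Matrix.one_mul]
    simp only [Matrix.mul_assoc]
  rw [hPMX] at e2
  have e1 : (1 - (Y * Lᵀ * MY⁻¹) * L) * (Y - X) * (1 - Lᵀ * (MY⁻¹ * (L * Y))) =
      (Y - X) - Y * Lᵀ * (MY⁻¹ * (L * (Y - X))) - (Y - X) * (Lᵀ * (MY⁻¹ * (L * Y)))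
        + Y * Lᵀ * (MY⁻¹ * (L * ((Y - X) * (Lᵀ * (MY⁻¹ * (L * Y)))))) := by
    simp only [Matrix.mul_sub, Matrix.sub_mul, Matrix.mul_one, Matrix.one_mul, Matrix.mul_assoc]
    abel
  have hE : (Y - Y * Lᵀ * (MY⁻¹ * (L * Y))) - (X - X * Lᵀ * (MX⁻¹ * (L * X))) =
      (1 - (Y * Lᵀ * MY⁻¹) * L) * (Y - X) * (1 - Lᵀ * (MY⁻¹ * (L * Y))) +
        ((Y * Lᵀ * MY⁻¹) - X * Lᵀ * MX⁻¹) * MX * (MY⁻¹ * (L * Y) - MX⁻¹ * (L * X)) := by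
    rw [e1, e2]
    simp only [Matrix.mul_sub, Matrix.sub_mul, Matrix.mul_add, Matrix.add_mul, Matrix.mul_assoc]
    abel
  have hEpsd : ((Y - Y * Lᵀ * (MY⁻¹ * (L * Y))) - (X - X * Lᵀ * (MX⁻¹ * (L * X)))).PosSemidef := by
    rw [hE]; exact hT1.add hT2
  have hA1 : (A * (Y - X) * Aᵀ).PosSemidef := by
    have := hD.mul_mul_conjTranspose_same A
    rwa [herm_t] at this
  have hA2 : (A * ((Y - Y * Lᵀ * (MY⁻¹ * (L * Y))) - (X - X * Lᵀ * (MX⁻¹ * (L * X)))) *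
      Aᵀ).PosSemidef := by
    have := hEpsd.mul_mul_conjTranspose_same A
    rwa [herm_t] at this
  show (calX A L Q R lam Y al phi - calX A L Q R lam X al phi).PosSemidef
  have final : calX A L Q R lam Y al phi - calX A L Q R lam X al phi =
      (1 - lam * phi) • (A * (Y - X) * Aᵀ) +
        (lam * phi) • (A * ((Y - Y * Lᵀ * (MY⁻¹ * (L * Y))) -
          (X - X * Lᵀ * (MX⁻¹ * (L * X)))) * Aᵀ) := by
    simp only [calX]
    rw [← hMXdef, ← hMYdef]
    simp only [Matrix.mul_sub, Matrix.sub_mul, Matrix.mul_add, Matrix.add_mul, smul_sub,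
      smul_add, Matrix.mul_assoc]
    module
  rw [final]
  have h1 : 0 ≤ 1 - lam * phi := by nlinarith
  have h2 : 0 ≤ lam * phi := mul_nonneg hl0 hp0
  exact (psd_smul hA1 h1).add (psd_smul hA2 h2)
end

section
/- Inductive comparison step for coupled Riccati recursions: let β ≥ 1 and let Y_1,…,Y_N and Y'_1,…,Y'_N be n_x×n_x positive semidefinite symmetric matrices with β Y_m ⪰ Y'_m for all m = 1,…,N. Then for every n = 1,…,N, every λ ∈ [0,1], every γ̃_m ∈ [0,1] and every α_m > 0, one has β Σ_{m=1}^N p̃_{mn} 𝒳_λ(Y_m, α_m, γ̃_m) ⪰ Σ_{m=1}^N p̃_{mn} 𝒳_λ(Y'_m, α_m, γ̃_m). -/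
open Matrix

namespace Stmt6Aux

lemma psd_smul {k : ℕ} {M : Matrix (Fin k) (Fin k) ℝ} (hM : M.PosSemidef) {c : ℝ} (hc : 0 ≤ c) :
    (c • M).PosSemidef := by
  refine ⟨?_, fun x => ?_⟩
  · show (c • M)ᴴ = c • M
    rw [conjTranspose_smul, hM.1.eq, star_trivial]
  · exact (hM.smul hc).2 x

lemma pd_smul {k : ℕ} {M : Matrix (Fin k) (Fin k) ℝ} (hM : M.PosDef) {c : ℝ} (hc : 0 < c) :
    (c • M).PosDef := by
  refine ⟨?_, fun x hx => ?_⟩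
  · show (c • M)ᴴ = c • M
    rw [conjTranspose_smul, hM.1.eq, star_trivial]
  · exact (hM.smul hc).2 hx

lemma psd_conj {k l : ℕ} {M : Matrix (Fin k) (Fin k) ℝ} (hM : M.PosSemidef)
    (B : Matrix (Fin l) (Fin k) ℝ) : (B * M * Bᵀ).PosSemidef := by
  simpa [conjTranspose_eq_transpose_of_trivial] using hM.mul_mul_conjTranspose_same B

section

variable {nx ny : ℕ} (A : Matrix (Fin nx) (Fin nx) ℝ) (L : Matrix (Fin ny) (Fin nx) ℝ)
  (Q : Matrix (Fin nx) (Fin nx) ℝ) (R : Matrix (Fin ny) (Fin ny) ℝ)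

/-- Riccati part of `calX`. -/
noncomputable def gmap (al : ℝ) (X : Matrix (Fin nx) (Fin nx) ℝ) : Matrix (Fin nx) (Fin nx) ℝ :=
  A * X * Aᵀ + al • Q - A * X * Lᵀ * (L * X * Lᵀ + al • R)⁻¹ * (L * X * Aᵀ)

/-- The quadratic "gain" expression. -/
noncomputable def emap (al : ℝ) (K : Matrix (Fin nx) (Fin ny) ℝ)
    (X : Matrix (Fin nx) (Fin nx) ℝ) : Matrix (Fin nx) (Fin nx) ℝ :=
  (A - K * L) * X * (A - K * L)ᵀ + al • Q + K * (al • R) * Kᵀ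

lemma exprID (hR : R.PosDef) {X : Matrix (Fin nx) (Fin nx) ℝ} (hX : X.PosSemidef)
    {al : ℝ} (hal : 0 < al) (K : Matrix (Fin nx) (Fin ny) ℝ) :
    emap A L Q R al K X
      = gmap A L Q R al X
        + (K - A * X * Lᵀ * (L * X * Lᵀ + al • R)⁻¹) * (L * X * Lᵀ + al • R)
          * (K - A * X * Lᵀ * (L * X * Lᵀ + al • R)⁻¹)ᵀ := by
  have hXt : Xᵀ = X := by
    rw [← conjTranspose_eq_transpose_of_trivial]; exact hX.1
  simp only [emap, gmap]
  set Sm := L * X * Lᵀ + al • R with hSm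
  have hSpd : Sm.PosDef := Matrix.PosDef.posSemidef_add (psd_conj hX L) (pd_smul hR hal)
  have hSu : IsUnit Sm.det := hSpd.det_pos.ne'.isUnit
  have hinv1 : Sm⁻¹ * Sm = 1 := nonsing_inv_mul _ hSu
  have hinv2 : Sm * Sm⁻¹ = 1 := mul_nonsing_inv _ hSu
  have hSt : Smᵀ = Sm := by
    rw [← conjTranspose_eq_transpose_of_trivial]; exact hSpd.1
  have hSit : (Sm⁻¹)ᵀ = Sm⁻¹ := by
    rw [transpose_nonsing_inv, hSt]
  set Kx := A * X * Lᵀ * Sm⁻¹ with hKx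
  have h1 : Kx * Sm = A * X * Lᵀ := by
    rw [hKx, Matrix.mul_assoc (A * X * Lᵀ), hinv1, Matrix.mul_one]
  have h2 : Sm * Kxᵀ = L * (X * Aᵀ) := by
    have hKxt : Kxᵀ = Sm⁻¹ * (L * (X * Aᵀ)) := by
      rw [hKx]
      simp only [transpose_mul, transpose_transpose, hSit, hXt, Matrix.mul_assoc]
    rw [hKxt, ← Matrix.mul_assoc, hinv2, Matrix.one_mul]
  have hRa : al • R = Sm - L * X * Lᵀ := by
    rw [hSm, add_sub_cancel_left]
  have e1 : Kx * (Sm * Kᵀ) = A * (X * (Lᵀ * Kᵀ)) := by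
    rw [← Matrix.mul_assoc, h1, Matrix.mul_assoc, Matrix.mul_assoc]
  rw [hRa]
  simp only [transpose_sub, transpose_mul, Matrix.mul_sub, Matrix.sub_mul, Matrix.mul_assoc]
  rw [h2, e1]
  abel

lemma gmap_step (hQ : Q.PosDef) (hR : R.PosDef) {β : ℝ} (hβ : 1 ≤ β)
    {Ym Y'm : Matrix (Fin nx) (Fin nx) ℝ} (hYm : Ym.PosSemidef) (hY'm : Y'm.PosSemidef)
    (hc : (β • Ym - Y'm).PosSemidef) {al : ℝ} (hal : 0 < al) :
    (β • gmap A L Q R al Ym - gmap A L Q R al Y'm).PosSemidef := by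
  set K := A * Ym * Lᵀ * (L * Ym * Lᵀ + al • R)⁻¹ with hK
  have eY : gmap A L Q R al Ym = emap A L Q R al K Ym := by
    rw [exprID A L Q R hR hYm hal K, ← hK, sub_self, Matrix.zero_mul, Matrix.zero_mul, add_zero]
  have eY' := exprID A L Q R hR hY'm hal K
  have hD : ((K - A * Y'm * Lᵀ * (L * Y'm * Lᵀ + al • R)⁻¹) * (L * Y'm * Lᵀ + al • R)
      * (K - A * Y'm * Lᵀ * (L * Y'm * Lᵀ + al • R)⁻¹)ᵀ).PosSemidef :=
    psd_conj (Matrix.PosDef.posSemidef_add (psd_conj hY'm L) (pd_smul hR hal)).posSemidef _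
  have hE : (β • emap A L Q R al K Ym - emap A L Q R al K Y'm).PosSemidef := by
    have : β • emap A L Q R al K Ym - emap A L Q R al K Y'm
        = (A - K * L) * (β • Ym - Y'm) * (A - K * L)ᵀ + ((β - 1) * al) • Q
          + (β - 1) • (K * (al • R) * Kᵀ) := by
      simp only [emap, Matrix.mul_sub, Matrix.sub_mul, Matrix.mul_smul, Matrix.smul_mul,
        smul_add, smul_sub, smul_smul, sub_smul, one_smul]
      module
    rw [this]
    have hb1 : (0:ℝ) ≤ β - 1 := by linarith
    exact ((psd_conj hc _).add (psd_smul hQ.posSemidef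
      (mul_nonneg hb1 hal.le))).add (psd_smul (psd_conj (psd_smul hR.posSemidef hal.le) K) hb1)
  have : β • gmap A L Q R al Ym - gmap A L Q R al Y'm
      = (β • emap A L Q R al K Ym - emap A L Q R al K Y'm)
        + (K - A * Y'm * Lᵀ * (L * Y'm * Lᵀ + al • R)⁻¹) * (L * Y'm * Lᵀ + al • R)
          * (K - A * Y'm * Lᵀ * (L * Y'm * Lᵀ + al • R)⁻¹)ᵀ := by
    rw [eY, eY']; abel
  rw [this]
  exact hE.add hD

lemma calX_step (hQ : Q.PosDef) (hR : R.PosDef) {β : ℝ} (hβ : 1 ≤ β)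
    {Ym Y'm : Matrix (Fin nx) (Fin nx) ℝ} (hYm : Ym.PosSemidef) (hY'm : Y'm.PosSemidef)
    (hc : (β • Ym - Y'm).PosSemidef) {lam γm al : ℝ}
    (hlam : lam ∈ Set.Icc (0:ℝ) 1) (hγ : γm ∈ Set.Icc (0:ℝ) 1) (hal : 0 < al) :
    (β • calX A L Q R lam Ym al γm - calX A L Q R lam Y'm al γm).PosSemidef := by
  have hμ0 : 0 ≤ lam * γm := mul_nonneg hlam.1 hγ.1
  have hμ1 : lam * γm ≤ 1 := mul_le_one₀ hlam.2 hγ.1 hγ.2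
  have hH : (β • (A * Ym * Aᵀ + al • Q) - (A * Y'm * Aᵀ + al • Q)).PosSemidef := by
    have : β • (A * Ym * Aᵀ + al • Q) - (A * Y'm * Aᵀ + al • Q)
        = A * (β • Ym - Y'm) * Aᵀ + ((β - 1) * al) • Q := by
      simp only [Matrix.mul_sub, Matrix.sub_mul, Matrix.mul_smul, Matrix.smul_mul,
        smul_add, smul_sub, smul_smul, sub_smul, one_smul]
      module
    rw [this]
    exact (psd_conj hc A).add (psd_smul hQ.posSemidef (mul_nonneg (by linarith) hal.le))
  have hG := gmap_step A L Q R hQ hR hβ hYm hY'm hc hal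
  have : β • calX A L Q R lam Ym al γm - calX A L Q R lam Y'm al γm
      = (1 - lam * γm) • (β • (A * Ym * Aᵀ + al • Q) - (A * Y'm * Aᵀ + al • Q))
        + (lam * γm) • (β • gmap A L Q R al Ym - gmap A L Q R al Y'm) := by
    simp only [calX, gmap, smul_add, smul_sub, smul_smul]
    module
  rw [this]
  exact (psd_smul hH (by linarith)).add (psd_smul hG hμ0)

end

end Stmt6Aux

theorem stmt_6 {nx ny N : ℕ} (hnx : 0 < nx) (hny : 0 < ny) (hN : 0 < N)
    (A : Matrix (Fin nx) (Fin nx) ℝ) (L : Matrix (Fin ny) (Fin nx) ℝ)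
    (Q : Matrix (Fin nx) (Fin nx) ℝ) (R : Matrix (Fin ny) (Fin ny) ℝ)
    (hQ : Q.PosDef) (hR : R.PosDef)
    (P : Matrix (Fin N) (Fin N) ℝ)
    (hPnonneg : ∀ m n, 0 ≤ P m n) (hProw : ∀ m, ∑ n, P m n = 1)
    (β : ℝ) (hβ : 1 ≤ β)
    (Y Y' : Fin N → Matrix (Fin nx) (Fin nx) ℝ)
    (hY : ∀ m, (Y m).PosSemidef) (hY' : ∀ m, (Y' m).PosSemidef)
    (hcomp : ∀ m, loewnerLE (Y' m) (β • Y m))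
    (lam : ℝ) (hlam : lam ∈ Set.Icc (0 : ℝ) 1)
    (γ : Fin N → ℝ) (hγ : ∀ m, γ m ∈ Set.Icc (0 : ℝ) 1)
    (α : Fin N → ℝ) (hα : ∀ m, 0 < α m)
    (n : Fin N) :
    loewnerLE (∑ m, P m n • calX A L Q R lam (Y' m) (α m) (γ m))
      (β • ∑ m, P m n • calX A L Q R lam (Y m) (α m) (γ m)) := by
  show (β • ∑ m, P m n • calX A L Q R lam (Y m) (α m) (γ m)
      - ∑ m, P m n • calX A L Q R lam (Y' m) (α m) (γ m)).PosSemidef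
  rw [Finset.smul_sum, ← Finset.sum_sub_distrib]
  have : ∀ m ∈ Finset.univ, (β • P m n • calX A L Q R lam (Y m) (α m) (γ m)
      - P m n • calX A L Q R lam (Y' m) (α m) (γ m)).PosSemidef := by
    intro m _
    have h : β • P m n • calX A L Q R lam (Y m) (α m) (γ m)
        - P m n • calX A L Q R lam (Y' m) (α m) (γ m)
        = P m n • (β • calX A L Q R lam (Y m) (α m) (γ m)
            - calX A L Q R lam (Y' m) (α m) (γ m)) := by
      rw [smul_sub, smul_comm]
    rw [h]
    exact Stmt6Aux.psd_smul
      (Stmt6Aux.calX_step A L Q R hQ hR hβ (hY m) (hY' m) (hcomp m) hlam (hγ m) (hα m))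
      (hPnonneg m n)
  exact Finset.sum_induction _ _ (fun a b ha hb => ha.add hb) Matrix.PosSemidef.zero this
end

section
/- Uniform comparison of two coupled Riccati recursion trajectories (Claim 1): assume that for every n ∈ {1,…,N} there exists m with p̃_{mn} > 0. Let (Ỹ_n(k))_{n=1,…,N, k∈ℕ} and (Ỹ'_n(k))_{n=1,…,N, k∈ℕ} be two solutions of the recursion Ỹ_n(k+1) = Σ_{m=1}^N p̃_{mn} 𝒳_λ(Ỹ_m(k), α_m(k), γ̃_m), each with positive semidefinite symmetric initial N-tuples. Then there exists a constant β > 1 such that β Ỹ_m(k) ⪰ Ỹ'_m(k) for all m = 1,…,N and all k ≥ 1. -/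
open Matrix

namespace Aux7

lemma herm_of_symm {n : ℕ} {M : Matrix (Fin n) (Fin n) ℝ} (h : Mᵀ = M) : M.IsHermitian := by
  rwa [Matrix.IsHermitian, conjTranspose_eq_transpose_of_trivial]

lemma symm_of_herm {n : ℕ} {M : Matrix (Fin n) (Fin n) ℝ} (h : M.IsHermitian) : Mᵀ = M := by
  rwa [Matrix.IsHermitian, conjTranspose_eq_transpose_of_trivial] at h

lemma psd_smul {n : ℕ} {M : Matrix (Fin n) (Fin n) ℝ} (hM : M.PosSemidef) {c : ℝ}
    (hc : 0 ≤ c) : (c • M).PosSemidef := by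
  refine Matrix.PosSemidef.of_dotProduct_mulVec_nonneg (herm_of_symm ?_) fun x => ?_
  · rw [transpose_smul, symm_of_herm hM.1]
  · rw [smul_mulVec, dotProduct_smul, smul_eq_mul]
    exact mul_nonneg hc (hM.dotProduct_mulVec_nonneg x)

lemma pd_smul {n : ℕ} {M : Matrix (Fin n) (Fin n) ℝ} (hM : M.PosDef) {c : ℝ}
    (hc : 0 < c) : (c • M).PosDef := by
  refine Matrix.PosDef.of_dotProduct_mulVec_pos (herm_of_symm ?_) fun x hx => ?_
  · rw [transpose_smul, symm_of_herm hM.1]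
  · rw [smul_mulVec, dotProduct_smul, smul_eq_mul]
    exact mul_pos hc (hM.dotProduct_mulVec_pos hx)

lemma psd_conj {n m : ℕ} {X : Matrix (Fin n) (Fin n) ℝ} (hX : X.PosSemidef)
    (B : Matrix (Fin m) (Fin n) ℝ) : (B * X * Bᵀ).PosSemidef := by
  simpa [conjTranspose_eq_transpose_of_trivial] using hX.mul_mul_conjTranspose_same B

lemma psd_sum {n : ℕ} {ι : Type*} (s : Finset ι) (f : ι → Matrix (Fin n) (Fin n) ℝ)
    (hf : ∀ i ∈ s, (f i).PosSemidef) : (∑ i ∈ s, f i).PosSemidef := by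
  classical
  induction s using Finset.induction_on with
  | empty => simpa using Matrix.PosSemidef.zero
  | insert _ _ h ih =>
    rw [Finset.sum_insert h]
    exact (hf _ (Finset.mem_insert_self _ _)).add
      (ih fun i hi => hf i (Finset.mem_insert_of_mem hi))

lemma lle_trans {n : ℕ} {X Y Z : Matrix (Fin n) (Fin n) ℝ} (h1 : loewnerLE X Y)
    (h2 : loewnerLE Y Z) : loewnerLE X Z := by
  have := h2.add h1
  simpa [loewnerLE, sub_add_sub_cancel] using this

lemma lle_smul {n : ℕ} {X Y : Matrix (Fin n) (Fin n) ℝ} (h : loewnerLE X Y) {c : ℝ}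
    (hc : 0 ≤ c) : loewnerLE (c • X) (c • Y) := by
  have := psd_smul h hc
  simpa [loewnerLE, smul_sub] using this

lemma lle_sum {n : ℕ} {ι : Type*} (s : Finset ι) (f g : ι → Matrix (Fin n) (Fin n) ℝ)
    (h : ∀ i ∈ s, loewnerLE (f i) (g i)) :
    loewnerLE (∑ i ∈ s, f i) (∑ i ∈ s, g i) := by
  have : (∑ i ∈ s, (g i - f i)).PosSemidef := psd_sum s _ h
  simpa [loewnerLE, Finset.sum_sub_distrib] using this

lemma trace_nonneg_of_psd {n : ℕ} {W : Matrix (Fin n) (Fin n) ℝ} (hW : W.PosSemidef) :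
    0 ≤ W.trace := by
  rw [Matrix.trace]
  refine Finset.sum_nonneg fun i _ => ?_
  have := hW.dotProduct_mulVec_nonneg (Pi.single i 1)
  simpa [Matrix.diag, dotProduct, mulVec, Pi.single_apply] using this

open scoped MatrixOrder in
lemma psd_le_trace_smul_one {n : ℕ} {W : Matrix (Fin n) (Fin n) ℝ} (hW : W.PosSemidef) :
    loewnerLE W (W.trace • 1) := by
  obtain ⟨C, hC⟩ : ∃ C : Matrix (Fin n) (Fin n) ℝ, W = Cᴴ * C :=
    ⟨CFC.sqrt W, by
      rw [(Matrix.nonneg_iff_posSemidef.mp (CFC.sqrt_nonneg W)).1.eq]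
      exact (CFC.sqrt_mul_sqrt_self W (Matrix.nonneg_iff_posSemidef.mpr hW)).symm⟩
  rw [conjTranspose_eq_transpose_of_trivial] at hC
  refine Matrix.PosSemidef.of_dotProduct_mulVec_nonneg (herm_of_symm ?_) fun x => ?_
  · rw [transpose_sub, transpose_smul, transpose_one, symm_of_herm hW.1]
  · have hxW : dotProduct x (W *ᵥ x) = dotProduct (C *ᵥ x) (C *ᵥ x) := by
      rw [hC, ← Matrix.mulVec_mulVec, Matrix.dotProduct_mulVec, Matrix.vecMul_transpose]
    have hbound : dotProduct (C *ᵥ x) (C *ᵥ x) ≤ W.trace * dotProduct x x := by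
      have htr : W.trace = ∑ i, ∑ j, (C i j) ^ 2 := by
        rw [hC, Matrix.trace]
        simp [Matrix.diag, Matrix.mul_apply, Matrix.transpose_apply, pow_two]
        exact Finset.sum_comm
      rw [htr, Finset.sum_mul]
      refine Finset.sum_le_sum fun i _ => ?_
      have := Finset.sum_mul_sq_le_sq_mul_sq Finset.univ (fun j => C i j) x
      calc dotProduct (fun j => C i j) x * dotProduct (fun j => C i j) x
          = (∑ j, C i j * x j) ^ 2 := by rw [pow_two]; rfl
        _ ≤ (∑ j, (C i j) ^ 2) * (∑ j, (x j) ^ 2) := this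
        _ = (∑ j, (C i j) ^ 2) * dotProduct x x := by
            congr 1; simp [dotProduct, pow_two]
    have hx1 : dotProduct x ((W.trace • (1 : Matrix (Fin n) (Fin n) ℝ)) *ᵥ x)
        = W.trace * dotProduct x x := by
      rw [smul_mulVec, dotProduct_smul, one_mulVec, smul_eq_mul]
    have : dotProduct x ((W.trace • (1 : Matrix (Fin n) (Fin n) ℝ) - W) *ᵥ x)
        = W.trace * dotProduct x x - dotProduct x (W *ᵥ x) := by
      rw [sub_mulVec, dotProduct_sub, hx1]
    simp only [star_trivial]
    rw [this, hxW]
    have : dotProduct (C *ᵥ x) (C *ᵥ x) ≤ W.trace * dotProduct x x := hbound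
    linarith [this]

open scoped MatrixOrder in
lemma exists_smul_posdef_le {n : ℕ} {Q S : Matrix (Fin n) (Fin n) ℝ} (hQ : Q.PosDef)
    (hS : S.PosSemidef) : ∃ t : ℝ, 0 ≤ t ∧ loewnerLE S (t • Q) := by
  classical
  set q := CFC.sqrt Q with hq
  have hqpsd : q.PosSemidef := Matrix.nonneg_iff_posSemidef.mp (CFC.sqrt_nonneg Q)
  have hq2 : q * q = Q := CFC.sqrt_mul_sqrt_self Q (Matrix.nonneg_iff_posSemidef.mpr hQ.posSemidef)
  have hqT : qᵀ = q := symm_of_herm hqpsd.1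
  have hdet : IsUnit q.det := by
    have hQdet : 0 < Q.det := hQ.det_pos
    rw [← hq2, Matrix.det_mul] at hQdet
    have : q.det ≠ 0 := by intro h; rw [h] at hQdet; simp at hQdet
    exact this.isUnit
  have h1 : q * q⁻¹ = 1 := Matrix.mul_nonsing_inv q hdet
  have h2 : q⁻¹ * q = 1 := Matrix.nonsing_inv_mul q hdet
  have hqiT : q⁻¹ᵀ = q⁻¹ := by rw [Matrix.transpose_nonsing_inv, hqT]
  set W := q⁻¹ * S * q⁻¹ᵀ with hW
  have hWpsd : W.PosSemidef := psd_conj hS q⁻¹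
  refine ⟨W.trace, trace_nonneg_of_psd hWpsd, ?_⟩
  have key : W.trace • Q - S = q * (W.trace • (1 : Matrix (Fin n) (Fin n) ℝ) - W) * qᵀ := by
    rw [Matrix.mul_sub, Matrix.sub_mul]
    congr 1
    · rw [Matrix.mul_smul, Matrix.smul_mul, Matrix.mul_one, hqT, hq2]
    · rw [hW, hqT, hqiT]
      symm
      calc q * (q⁻¹ * S * q⁻¹) * q
          = (q * q⁻¹) * S * (q⁻¹ * q) := by noncomm_ring
        _ = S := by rw [h1, h2, Matrix.one_mul, Matrix.mul_one]
  show (W.trace • Q - S).PosSemidef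
  rw [key]
  exact psd_conj (psd_le_trace_smul_one hWpsd) q

section Core

variable {nx ny : ℕ} (A : Matrix (Fin nx) (Fin nx) ℝ) (L : Matrix (Fin ny) (Fin nx) ℝ)
  (Q : Matrix (Fin nx) (Fin nx) ℝ) (R : Matrix (Fin ny) (Fin ny) ℝ)

noncomputable def Fq (c al : ℝ) (K : Matrix (Fin nx) (Fin ny) ℝ)
    (X : Matrix (Fin nx) (Fin nx) ℝ) : Matrix (Fin nx) (Fin nx) ℝ :=
  (1 - c) • (A * X * Aᵀ) + c • ((A - K * L) * X * (A - K * L)ᵀ) + al • Q +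
    (c * al) • (K * R * Kᵀ)

lemma calX_eq (lam al phi : ℝ) (X : Matrix (Fin nx) (Fin nx) ℝ) (hX : Xᵀ = X) :
    calX A L Q R lam X al phi =
      (A * X * Aᵀ + al • Q) -
        (lam * phi) • (A * X * Lᵀ * (L * X * Lᵀ + al • R)⁻¹ * (A * X * Lᵀ)ᵀ) := by
  have hB : L * X * Aᵀ = (A * X * Lᵀ)ᵀ := by
    simp [transpose_mul, transpose_transpose, hX, Matrix.mul_assoc]
  unfold calX
  rw [hB]
  module

lemma key_identity (lam al phi : ℝ) (X : Matrix (Fin nx) (Fin nx) ℝ)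
    (K : Matrix (Fin nx) (Fin ny) ℝ) (hX : Xᵀ = X)
    (hM : (L * X * Lᵀ + al • R).PosDef) :
    Fq A L Q R (lam * phi) al K X - calX A L Q R lam X al phi =
      (lam * phi) • ((K - A * X * Lᵀ * (L * X * Lᵀ + al • R)⁻¹) * (L * X * Lᵀ + al • R) *
        (K - A * X * Lᵀ * (L * X * Lᵀ + al • R)⁻¹)ᵀ) := by
  rw [calX_eq A L Q R lam al phi X hX]
  set M := L * X * Lᵀ + al • R with hMdef
  have hMT : Mᵀ = M := symm_of_herm hM.1
  have hdet : IsUnit M.det := (Matrix.isUnit_iff_isUnit_det M).mp hM.isUnit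
  have hMiT : M⁻¹ᵀ = M⁻¹ := by rw [Matrix.transpose_nonsing_inv, hMT]
  have hDM : (K - A * X * Lᵀ * M⁻¹) * M = K * M - A * X * Lᵀ := by
    rw [Matrix.sub_mul, Matrix.nonsing_inv_mul_cancel_right _ _ hdet]
  have hDT : (K - A * X * Lᵀ * M⁻¹)ᵀ = Kᵀ - M⁻¹ * (L * (X * Aᵀ)) := by
    simp [transpose_sub, transpose_mul, transpose_transpose, hMiT, hX, Matrix.mul_assoc]
  have hexp : (K - A * X * Lᵀ * M⁻¹) * M * (K - A * X * Lᵀ * M⁻¹)ᵀ =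
      K * (L * (X * (Lᵀ * Kᵀ))) + al • (K * (R * Kᵀ)) - K * (L * (X * Aᵀ))
        - A * (X * (Lᵀ * Kᵀ)) + A * X * Lᵀ * M⁻¹ * (A * X * Lᵀ)ᵀ := by
    rw [hDM, hDT]
    have hKM : K * M * Kᵀ = K * (L * (X * (Lᵀ * Kᵀ))) + al • (K * (R * Kᵀ)) := by
      rw [hMdef]
      simp [Matrix.mul_add, Matrix.add_mul, mul_smul_comm, smul_mul_assoc, Matrix.mul_assoc]
    have hcancel : K * M * (M⁻¹ * (L * (X * Aᵀ))) = K * (L * (X * Aᵀ)) := by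
      rw [Matrix.mul_assoc, Matrix.mul_nonsing_inv_cancel_left _ _ hdet]
    have hBT : (A * X * Lᵀ)ᵀ = L * (X * Aᵀ) := by
      simp [transpose_mul, transpose_transpose, hX, Matrix.mul_assoc]
    rw [Matrix.sub_mul, Matrix.mul_sub, Matrix.mul_sub, hKM, hcancel, hBT]
    simp only [Matrix.mul_assoc]
    abel
  rw [hexp]
  simp only [Fq, Matrix.sub_mul, Matrix.mul_sub, transpose_sub, transpose_mul,
    transpose_transpose, hX, Matrix.mul_assoc, smul_mul_assoc, mul_smul_comm]
  module

variable {al lam phi : ℝ}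

lemma M_posdef (hR : R.PosDef) {X : Matrix (Fin nx) (Fin nx) ℝ} (hX : X.PosSemidef) (hal : 0 < al) :
    (L * X * Lᵀ + al • R).PosDef :=
  Matrix.PosDef.posSemidef_add (psd_conj hX L) (pd_smul hR hal)

lemma calX_le_Fq (hR : R.PosDef) (hc : 0 ≤ lam * phi) (hal : 0 < al)
    {X : Matrix (Fin nx) (Fin nx) ℝ} (hX : X.PosSemidef) (K : Matrix (Fin nx) (Fin ny) ℝ) :
    loewnerLE (calX A L Q R lam X al phi) (Fq A L Q R (lam * phi) al K X) := by
  have hM := M_posdef L R hR hX hal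
  show (Fq A L Q R (lam * phi) al K X - calX A L Q R lam X al phi).PosSemidef
  rw [key_identity A L Q R lam al phi X K (symm_of_herm hX.1) hM]
  exact psd_smul (psd_conj hM.posSemidef _) hc

lemma calX_eq_Fq (hR : R.PosDef) (hal : 0 < al) {X : Matrix (Fin nx) (Fin nx) ℝ} (hX : X.PosSemidef) :
    calX A L Q R lam X al phi =
      Fq A L Q R (lam * phi) al (A * X * Lᵀ * (L * X * Lᵀ + al • R)⁻¹) X := by
  have hM := M_posdef L R hR hX hal
  have h := key_identity A L Q R lam al phi X (A * X * Lᵀ * (L * X * Lᵀ + al • R)⁻¹)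
    (symm_of_herm hX.1) hM
  rw [sub_self] at h
  simp only [Matrix.zero_mul, smul_zero] at h
  exact (sub_eq_zero.mp h).symm

lemma Fq_mono (c : ℝ) (hc : 0 ≤ c) (hc1 : c ≤ 1) (K : Matrix (Fin nx) (Fin ny) ℝ)
    {X X' : Matrix (Fin nx) (Fin nx) ℝ} (hle : loewnerLE X X') :
    loewnerLE (Fq A L Q R c al K X) (Fq A L Q R c al K X') := by
  show (Fq A L Q R c al K X' - Fq A L Q R c al K X).PosSemidef
  have key : Fq A L Q R c al K X' - Fq A L Q R c al K X =
      (1 - c) • (A * (X' - X) * Aᵀ) + c • ((A - K * L) * (X' - X) * (A - K * L)ᵀ) := by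
    simp only [Fq, Matrix.mul_sub, Matrix.sub_mul]
    module
  rw [key]
  exact (psd_smul (psd_conj hle A) (by linarith)).add (psd_smul (psd_conj hle (A - K * L)) hc)

lemma Fq_scale (hR : R.PosDef) (hQ : Q.PosSemidef) (c : ℝ) (hc : 0 ≤ c) (hal : 0 ≤ al)
    (K : Matrix (Fin nx) (Fin ny) ℝ) {b : ℝ} (hb : 1 ≤ b) (X : Matrix (Fin nx) (Fin nx) ℝ) :
    loewnerLE (Fq A L Q R c al K (b • X)) (b • Fq A L Q R c al K X) := by
  show _root_.Matrix.PosSemidef _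
  have key : b • Fq A L Q R c al K X - Fq A L Q R c al K (b • X) =
      ((b - 1) * al) • Q + ((b - 1) * (c * al)) • (K * R * Kᵀ) := by
    simp only [Fq, Matrix.mul_smul, Matrix.smul_mul]
    module
  rw [key]
  exact (psd_smul hQ (mul_nonneg (by linarith) hal)).add
    (psd_smul (psd_conj hR.posSemidef K) (mul_nonneg (by linarith) (mul_nonneg hc hal)))

lemma calX_mono (hR : R.PosDef) (hc : 0 ≤ lam * phi) (hc1 : lam * phi ≤ 1) (hal : 0 < al)
    {X X' : Matrix (Fin nx) (Fin nx) ℝ} (hX : X.PosSemidef) (hX' : X'.PosSemidef)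
    (hle : loewnerLE X X') :
    loewnerLE (calX A L Q R lam X al phi) (calX A L Q R lam X' al phi) := by
  have h1 := calX_le_Fq A L Q R hR hc hal hX (A * X' * Lᵀ * (L * X' * Lᵀ + al • R)⁻¹)
  have h2 := Fq_mono A L Q R (lam * phi) hc hc1
    (A * X' * Lᵀ * (L * X' * Lᵀ + al • R)⁻¹) hle (al := al)
  rw [← calX_eq_Fq A L Q R hR hal hX'] at h2
  exact lle_trans h1 h2

lemma calX_scale (hR : R.PosDef) (hQ : Q.PosSemidef) (hc : 0 ≤ lam * phi) (hal : 0 < al)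
    {X : Matrix (Fin nx) (Fin nx) ℝ} (hX : X.PosSemidef) {b : ℝ} (hb : 1 ≤ b) :
    loewnerLE (calX A L Q R lam (b • X) al phi) (b • calX A L Q R lam X al phi) := by
  have h1 := calX_le_Fq A L Q R hR hc hal (psd_smul hX (by linarith : (0:ℝ) ≤ b))
    (A * X * Lᵀ * (L * X * Lᵀ + al • R)⁻¹)
  have h2 := Fq_scale A L Q R hR hQ (lam * phi) hc hal.le
    (A * X * Lᵀ * (L * X * Lᵀ + al • R)⁻¹) hb X
  rw [← calX_eq_Fq A L Q R hR hal hX] at h2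
  exact lle_trans h1 h2

lemma calX_lb (hR : R.PosDef) (hc : 0 ≤ lam * phi) (hc1 : lam * phi ≤ 1) (hal : 0 < al)
    {X : Matrix (Fin nx) (Fin nx) ℝ} (hX : X.PosSemidef) :
    loewnerLE (al • Q) (calX A L Q R lam X al phi) := by
  rw [calX_eq_Fq A L Q R hR hal hX]
  show _root_.Matrix.PosSemidef _
  set K := A * X * Lᵀ * (L * X * Lᵀ + al • R)⁻¹ with hK
  have key : Fq A L Q R (lam * phi) al K X - al • Q =
      (1 - lam * phi) • (A * X * Aᵀ) + (lam * phi) • ((A - K * L) * X * (A - K * L)ᵀ) +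
        (lam * phi * al) • (K * R * Kᵀ) := by
    simp only [Fq]
    module
  rw [key]
  exact ((psd_smul (psd_conj hX A) (by linarith)).add
    (psd_smul (psd_conj hX (A - K * L)) hc)).add
    (psd_smul (psd_conj hR.posSemidef K) (by positivity))

lemma calX_psd (hR : R.PosDef) (hQ : Q.PosSemidef) (hc : 0 ≤ lam * phi) (hc1 : lam * phi ≤ 1) (hal : 0 < al)
    {X : Matrix (Fin nx) (Fin nx) ℝ} (hX : X.PosSemidef) :
    (calX A L Q R lam X al phi).PosSemidef := by
  have h := calX_lb A L Q R hR hc hc1 hal hX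
  have : calX A L Q R lam X al phi =
      (calX A L Q R lam X al phi - al • Q) + al • Q := by abel
  rw [this]
  exact h.add (psd_smul hQ hal.le)

end Core

end Aux7

theorem stmt_7 {nx ny N : ℕ} (hnx : 0 < nx) (hny : 0 < ny) (hN : 0 < N)
    (A : Matrix (Fin nx) (Fin nx) ℝ) (L : Matrix (Fin ny) (Fin nx) ℝ)
    (Q : Matrix (Fin nx) (Fin nx) ℝ) (R : Matrix (Fin ny) (Fin ny) ℝ)
    (hQ : Q.PosDef) (hR : R.PosDef)
    (P : Matrix (Fin N) (Fin N) ℝ)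
    (hPnonneg : ∀ m n, 0 ≤ P m n) (hProw : ∀ m, ∑ n, P m n = 1)
    (hPcol : ∀ n, ∃ m, 0 < P m n)
    (lam : ℝ) (hlam : lam ∈ Set.Icc (0 : ℝ) 1)
    (γ : Fin N → ℝ) (hγ : ∀ m, γ m ∈ Set.Icc (0 : ℝ) 1)
    (α : Fin N → ℕ → ℝ) (hα : ∀ m k, 0 < α m k)
    (Y Y' : ℕ → Fin N → Matrix (Fin nx) (Fin nx) ℝ)
    (hY0 : ∀ m, (Y 0 m).PosSemidef) (hY'0 : ∀ m, (Y' 0 m).PosSemidef)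
    (hYrec : ∀ k n, Y (k + 1) n = ∑ m, P m n • calX A L Q R lam (Y k m) (α m k) (γ m))
    (hY'rec : ∀ k n, Y' (k + 1) n = ∑ m, P m n • calX A L Q R lam (Y' k m) (α m k) (γ m)) :
    ∃ β : ℝ, 1 < β ∧ ∀ m, ∀ k, 1 ≤ k → loewnerLE (Y' k m) (β • Y k m) := by
  classical
  obtain ⟨hlam0, hlam1⟩ := hlam
  have hcm0 : ∀ m, 0 ≤ lam * γ m := fun m => mul_nonneg hlam0 (hγ m).1
  have hcm1 : ∀ m, lam * γ m ≤ 1 := by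
    intro m
    calc lam * γ m ≤ 1 * 1 := by
          apply mul_le_mul hlam1 (hγ m).2 (hγ m).1 zero_le_one
      _ = 1 := by ring
  have hYpsd : ∀ k m, (Y k m).PosSemidef := by
    intro k
    induction k with
    | zero => exact hY0
    | succ k ih =>
      intro n
      rw [hYrec]
      exact Aux7.psd_sum _ _ fun m _ => Aux7.psd_smul
        (Aux7.calX_psd A L Q R hR hQ.posSemidef (hcm0 m) (hcm1 m) (hα m k) (ih m))
        (hPnonneg m n)
  have hY'psd : ∀ k m, (Y' k m).PosSemidef := by
    intro k
    induction k with
    | zero => exact hY'0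
    | succ k ih =>
      intro n
      rw [hY'rec]
      exact Aux7.psd_sum _ _ fun m _ => Aux7.psd_smul
        (Aux7.calX_psd A L Q R hR hQ.posSemidef (hcm0 m) (hcm1 m) (hα m k) (ih m))
        (hPnonneg m n)
  have step : ∀ (b : ℝ), 1 ≤ b → ∀ k, (∀ m, loewnerLE (Y' k m) (b • Y k m)) →
      ∀ n, loewnerLE (Y' (k + 1) n) (b • Y (k + 1) n) := by
    intro b hb k hk n
    rw [hYrec, hY'rec, Finset.smul_sum]
    refine Aux7.lle_sum _ _ _ fun m _ => ?_
    rw [smul_comm]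
    refine Aux7.lle_smul ?_ (hPnonneg m n)
    exact Aux7.lle_trans
      (Aux7.calX_mono A L Q R hR (hcm0 m) (hcm1 m) (hα m k) (hY'psd k m)
        (Aux7.psd_smul (hYpsd k m) (by linarith)) (hk m))
      (Aux7.calX_scale A L Q R hR hQ.posSemidef (hcm0 m) (hα m k) (hYpsd k m) hb)
  have hepos : ∀ n, 0 < ∑ m, P m n * α m 0 := by
    intro n
    obtain ⟨m0, hm0⟩ := hPcol n
    exact Finset.sum_pos' (fun m _ => mul_nonneg (hPnonneg m n) (hα m 0).le)
      ⟨m0, Finset.mem_univ _, mul_pos hm0 (hα m0 0)⟩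
  have hlbQ : ∀ n, loewnerLE ((∑ m, P m n * α m 0) • Q) (Y 1 n) := by
    intro n
    rw [hYrec 0 n, Finset.sum_smul]
    refine Aux7.lle_sum _ _ _ fun m _ => ?_
    rw [mul_smul]
    exact Aux7.lle_smul (Aux7.calX_lb A L Q R hR (hcm0 m) (hcm1 m) (hα m 0) (hY0 m))
      (hPnonneg m n)
  have hub : ∀ n, ∃ t : ℝ, 0 ≤ t ∧ loewnerLE (Y' 1 n) (t • Q) := fun n =>
    Aux7.exists_smul_posdef_le hQ (hY'psd 1 n)
  choose t ht0 htle using hub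
  set β : ℝ := 2 + ∑ n, t n / (∑ m, P m n * α m 0) with hβ
  have hdivnn : ∀ n, 0 ≤ t n / (∑ m, P m n * α m 0) := fun n =>
    div_nonneg (ht0 n) (hepos n).le
  have hβ1 : 1 < β := by
    have : 0 ≤ ∑ n, t n / (∑ m, P m n * α m 0) := Finset.sum_nonneg fun n _ => hdivnn n
    rw [hβ]; linarith
  have hβge : ∀ n, t n ≤ β * (∑ m, P m n * α m 0) := by
    intro n
    have h1 : t n / (∑ m, P m n * α m 0) ≤ β := by
      have := Finset.single_le_sum (fun i (_ : i ∈ Finset.univ) => hdivnn i)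
        (Finset.mem_univ n)
      rw [hβ]; linarith
    calc t n = (t n / (∑ m, P m n * α m 0)) * (∑ m, P m n * α m 0) :=
          (div_mul_cancel₀ (t n) (hepos n).ne').symm
      _ ≤ β * (∑ m, P m n * α m 0) := mul_le_mul_of_nonneg_right h1 (hepos n).le
  have hbase : ∀ n, loewnerLE (Y' 1 n) (β • Y 1 n) := by
    intro n
    have h1 : loewnerLE (t n • Q) ((β * (∑ m, P m n * α m 0)) • Q) := by
      show ((β * (∑ m, P m n * α m 0)) • Q - t n • Q).PosSemidef
      have heq : (β * (∑ m, P m n * α m 0)) • Q - t n • Q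
          = (β * (∑ m, P m n * α m 0) - t n) • Q := by module
      rw [heq]
      exact Aux7.psd_smul hQ.posSemidef (by linarith [hβge n])
    have h2 : loewnerLE ((β * (∑ m, P m n * α m 0)) • Q) (β • Y 1 n) := by
      have := Aux7.lle_smul (hlbQ n) (c := β) (by linarith)
      rwa [smul_smul] at this
    exact Aux7.lle_trans (htle n) (Aux7.lle_trans h1 h2)
  refine ⟨β, hβ1, ?_⟩
  have hall : ∀ k, 1 ≤ k → ∀ m, loewnerLE (Y' k m) (β • Y k m) := by
    intro k
    induction k with
    | zero => omega
    | succ k ih =>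
      intro _
      rcases Nat.eq_zero_or_pos k with h0 | hpos
      · subst h0; exact hbase
      · exact step β hβ1.le k (ih hpos)
  exact fun m k hk => hall k hk m
end
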